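/- Let σ ≤ τ in the consecutive pattern poset 𝒫. The interval [σ,τ] = {π : σ ≤ π ≤ τ} is a chain (i.e., totally ordered by ≤) if and only if either τ is monotone, or σ has exactly one occurrence in τ and that occurrence is a prefix (starting position 1) or a suffix (starting position |τ|−|σ|+1) of τ. -/

import Mathlib

open scoped Classical

noncomputable section

/-- A permutation of length `n`, written in one-line notation as `τ 0, τ 1, …, τ (n-1)`. -/
abbrev Perm' (n : ℕ) := Equiv.Perm (Fin n)

/-- `σ` occurs in `τ` as a consecutive pattern at (0-indexed) starting position `i`:
the window `τ i, …, τ (i+m-1)` of adjacent entries is in the same relative order as `σ`. -/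
def OccursAt {m n : ℕ} (σ : Perm' m) (τ : Perm' n) (i : ℕ) : Prop :=
  ∃ h : i + m ≤ n, ∀ a b : Fin m,
    σ a < σ b ↔
      τ ⟨i + a, by have := a.isLt; omega⟩ < τ ⟨i + b, by have := b.isLt; omega⟩

/-- Consecutive pattern containment `σ ≤ τ`. -/
def PattLE {m n : ℕ} (σ : Perm' m) (τ : Perm' n) : Prop :=
  ∃ i, OccursAt σ τ i

/-- Permutations of arbitrary length: the carrier of the consecutive pattern poset. -/
abbrev PermS : Type := Σ n : ℕ, Perm' n

/-- The order of the consecutive pattern poset. -/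
def pLE (p q : PermS) : Prop := PattLE p.2 q.2

/-- The strict order of the consecutive pattern poset. -/
def pLT (p q : PermS) : Prop := pLE p q ∧ p ≠ q

/-- The covering relation of the consecutive pattern poset. -/
def pCovBy (p q : PermS) : Prop :=
  pLT p q ∧ ∀ r : PermS, pLT p r → pLT r q → False

/-- The open interval `(p,q)` in the consecutive pattern poset. -/
def openInterval (p q : PermS) : Set PermS := {r | pLT p r ∧ pLT r q}

/-- The Hasse diagram of the open interval `(p,q)`: vertices are the permutations strictly
between `p` and `q`, edges are the covering relations of the consecutive pattern poset. -/
def hasse (p q : PermS) : SimpleGraph (openInterval p q) :=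
  SimpleGraph.fromRel fun a b => pCovBy a.1 b.1

/-- The interval `[p,q]` is disconnected if the Hasse diagram of `(p,q)` is not connected. -/
def IntervalDisconnected (p q : PermS) : Prop := ¬ (hasse p q).Connected

/-- `window τ i m` is the reduction of the window of `τ` of length `m` starting at
(0-indexed) position `i`, i.e. the pattern `τ[i+1, i+m]` in 1-indexed notation. -/
def window {n : ℕ} (τ : Perm' n) (i m : ℕ) : Perm' m :=
  if h : i + m ≤ n then
    (Tuple.sort fun a : Fin m => τ ⟨i + a, by have := a.isLt; omega⟩)⁻¹
  else 1

/-- `τ` is monotone, i.e. equal to `12…n` or `n…21`. -/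
def IsMonotone {n : ℕ} (τ : Perm' n) : Prop :=
  (∀ a b : Fin n, a ≤ b → τ a ≤ τ b) ∨ (∀ a b : Fin n, a ≤ b → τ b ≤ τ a)

/-- `τ` has a bifix (a common proper prefix and proper suffix) of length `k`. -/
def HasBifixLen {n : ℕ} (τ : Perm' n) (k : ℕ) : Prop :=
  0 < k ∧ k < n ∧ window τ 0 k = window τ (n - k) k

/-- The length `|x(τ)|` of the exterior of `τ`, the longest bifix of `τ`. -/
def extLen {n : ℕ} (τ : Perm' n) : ℕ := Nat.findGreatest (HasBifixLen τ) n

/-- The exterior `x(τ)` of `τ`: its longest bifix. -/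
def extPerm {n : ℕ} (τ : Perm' n) : Perm' (extLen τ) := window τ 0 (extLen τ)

/-- The interior `i(τ) = τ[2,n-1]` of `τ`. -/
def intPerm {n : ℕ} (τ : Perm' n) : Perm' (n - 2) := window τ 1 (n - 2)

/-- `p` straddles `q`: `p < q`, `p` is both a prefix and a suffix of `q`,
and `p` has no other occurrence in `q`. -/
def Straddles (p q : PermS) : Prop :=
  pLT p q ∧ OccursAt p.2 q.2 0 ∧ OccursAt p.2 q.2 (q.1 - p.1) ∧
    ∀ i, OccursAt p.2 q.2 i → i = 0 ∨ i = q.1 - p.1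

/-- The interval `[p,q]` contains a non-trivial disconnected subinterval, i.e. a
subinterval `[a,b]` of rank at least 3 which is disconnected. -/
def HasNontrivDisconSub (p q : PermS) : Prop :=
  ∃ a b : PermS, pLE p a ∧ pLE a b ∧ pLE b q ∧ a.1 + 3 ≤ b.1 ∧ IntervalDisconnected a b

/-- The finite set of all permutations of length at most `N`. -/
def permsUpTo (N : ℕ) : Finset PermS :=
  (Finset.range (N + 1)).sigma fun n => (Finset.univ : Finset (Perm' n))

/-- The closed interval `[p,q]` of the consecutive pattern poset, as a finite set. -/
def intervalF (p q : PermS) : Finset PermS :=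
  (permsUpTo q.1).filter fun r => pLE p r ∧ pLE r q

/-- The number of elements of the interval `[σ,τ]` of rank `r`, i.e. of length `|σ| + r`. -/
def rankCard {m n : ℕ} (σ : Perm' m) (τ : Perm' n) (r : ℕ) : ℕ :=
  ((permsUpTo n).filter fun p => pLE ⟨m, σ⟩ p ∧ pLE p ⟨n, τ⟩ ∧ p.1 = m + r).card

/-- The direct sum `σ ⊕ π` of two permutations. -/
def dsum {m k : ℕ} (σ : Perm' m) (π : Perm' k) : Perm' (m + k) :=
  finSumFinEquiv.permCongr (σ.sumCongr π)



/-! ### Auxiliary lemmas -/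

section Aux

variable {m n k l : ℕ}

lemma flt_congr (τ : Perm' n) {x y x' y' : ℕ} (ex : x = x') (ey : y = y')
    {hx : x < n} {hy : y < n} {hx' : x' < n} {hy' : y' < n} :
    (τ ⟨x, hx⟩ < τ ⟨y, hy⟩ ↔ τ ⟨x', hx'⟩ < τ ⟨y', hy'⟩) := by
  subst ex; subst ey; exact Iff.rfl

lemma fapp_congr (τ : Perm' n) {x : ℕ} {hx : x < n} {a : Fin n} (e : x = ↑a) :
    τ ⟨x, hx⟩ = τ a := by
  have : (⟨x, hx⟩ : Fin n) = a := Fin.ext e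
  rw [this]

/-- direction-parametrized strict order -/
def drel (d : Bool) {α : Type*} [LT α] (x y : α) : Prop :=
  match d with
  | true => x < y
  | false => y < x

lemma drel_trans {d : Bool} {α : Type*} [Preorder α] {x y z : α}
    (h1 : drel d x y) (h2 : drel d y z) : drel d x z := by
  cases d
  · exact lt_trans h2 h1
  · exact lt_trans h1 h2

lemma drel_congr {d : Bool} {α β : Type*} [LT α] [LT β] {x y : α} {x' y' : β}
    (h1 : x < y ↔ x' < y') (h2 : y < x ↔ y' < x') : (drel d x y ↔ drel d x' y') := by
  cases d
  · exact h2
  · exact h1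

/-- `f` is strictly monotone (if `d = true`) or strictly antitone (if `d = false`). -/
def DirP (d : Bool) {α : Type*} [LT α] (f : Fin k → α) : Prop :=
  ∀ a b : Fin k, a < b → drel d (f a) (f b)

lemma dir_of_adj {d : Bool} {α : Type*} [Preorder α] {f : Fin k → α}
    (h : ∀ c (hc : c + 1 < k), drel d (f ⟨c, by omega⟩) (f ⟨c + 1, hc⟩)) : DirP d f := by
  have key : ∀ t a (h1 : 1 ≤ t) (h2 : a + t < k), drel d (f ⟨a, by omega⟩) (f ⟨a + t, h2⟩) := by
    intro t
    induction t with
    | zero => omega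
    | succ t ih =>
      intro a h1 h2
      rcases Nat.eq_zero_or_pos t with ht | ht
      · subst ht; exact h a h2
      · exact drel_trans (ih a ht (by omega)) (h (a + t) h2)
  intro a b hab
  have hv : (a : ℕ) < (b : ℕ) := hab
  have := key ((b : ℕ) - a) a (by omega) (by omega)
  have e1 : (⟨(a : ℕ), by omega⟩ : Fin k) = a := Fin.ext rfl
  have e2 : (⟨(a : ℕ) + ((b : ℕ) - a), by omega⟩ : Fin k) = b :=
    Fin.ext (show (a : ℕ) + ((b : ℕ) - a) = b by omega)
  rwa [e1, e2] at this

lemma isMonotone_iff_dir {τ : Perm' n} : IsMonotone τ ↔ ∃ d, DirP d (⇑τ) := by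
  constructor
  · rintro (h | h)
    · exact ⟨true, fun a b hab =>
        show τ a < τ b from lt_of_le_of_ne (h a b hab.le) (τ.injective.ne hab.ne)⟩
    · exact ⟨false, fun a b hab =>
        show τ b < τ a from lt_of_le_of_ne (h a b hab.le) (τ.injective.ne hab.ne.symm)⟩
  · rintro ⟨d, hd⟩
    cases d
    · exact Or.inr (fun a b hab => by
        rcases eq_or_lt_of_le hab with h | h
        · rw [h]
        · exact le_of_lt (hd a b h))
    · exact Or.inl (fun a b hab => by
        rcases eq_or_lt_of_le hab with h | h
        · rw [h]
        · exact le_of_lt (hd a b h))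

lemma occ_spec {σ : Perm' m} {τ : Perm' n} {i : ℕ} (h : OccursAt σ τ i)
    (a b : Fin m) (hx : i + ↑a < n) (hy : i + ↑b < n) :
    σ a < σ b ↔ τ ⟨i + ↑a, hx⟩ < τ ⟨i + ↑b, hy⟩ := h.2 a b

lemma occ_trans {σ : Perm' m} {π : Perm' k} {τ : Perm' n} {s u : ℕ}
    (h1 : OccursAt σ π s) (h2 : OccursAt π τ u) : OccursAt σ τ (u + s) := by
  have hs := h1.1
  have hu := h2.1
  refine ⟨by omega, fun a b => ?_⟩
  have ha := a.isLt
  have hb := b.isLt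
  have e1 := occ_spec h1 a b (by omega) (by omega)
  have e2 := occ_spec h2 ⟨s + ↑a, by omega⟩ ⟨s + ↑b, by omega⟩
    (show u + (s + (a : ℕ)) < n by omega) (show u + (s + (b : ℕ)) < n by omega)
  rw [e1, e2]
  exact flt_congr τ (show u + (s + (a : ℕ)) = u + s + (a : ℕ) by omega)
    (show u + (s + (b : ℕ)) = u + s + (b : ℕ) by omega)

lemma window_eq (τ : Perm' n) {i k : ℕ} (h : i + k ≤ n) :
    window τ i k = (Tuple.sort fun a : Fin k => τ ⟨i + ↑a, by have := a.isLt; omega⟩)⁻¹ :=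
  dif_pos h

lemma window_occursAt (τ : Perm' n) (i k : ℕ) (h : i + k ≤ n) :
    OccursAt (window τ i k) τ i := by
  refine ⟨h, fun a b => ?_⟩
  set f : Fin k → Fin n := fun a => τ ⟨i + ↑a, by have := a.isLt; omega⟩ with hf
  have hw : window τ i k = (Tuple.sort f)⁻¹ := window_eq τ h
  rw [hw]
  have hinj : Function.Injective f := by
    intro x y hxy
    have h3 : i + (x : ℕ) = i + (y : ℕ) := congrArg Fin.val (τ.injective hxy)
    exact Fin.ext (by omega)
  have hsm : StrictMono (f ∘ Tuple.sort f) :=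
    (Tuple.monotone_sort f).strictMono_of_injective (hinj.comp (Tuple.sort f).injective)
  have main : ∀ x y : Fin k, (Tuple.sort f)⁻¹ x < (Tuple.sort f)⁻¹ y ↔ f x < f y := by
    intro x y
    rw [← hsm.lt_iff_lt]
    simp [Function.comp, Equiv.Perm.inv_def, Equiv.apply_symm_apply]
  exact main a b

lemma occ_window_of_occ {σ : Perm' m} {τ : Perm' n} {p i k : ℕ}
    (h : OccursAt σ τ p) (hip : i ≤ p) (hpk : p + m ≤ i + k) (hkn : i + k ≤ n) :
    OccursAt σ (window τ i k) (p - i) := by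
  have hb := h.1
  have hw := window_occursAt τ i k hkn
  refine ⟨by omega, fun a b => ?_⟩
  have ha := a.isLt
  have hb' := b.isLt
  have h1 := occ_spec h a b (by omega) (by omega)
  have h2 := occ_spec hw ⟨p - i + ↑a, show p - i + (a : ℕ) < k by omega⟩
    ⟨p - i + ↑b, show p - i + (b : ℕ) < k by omega⟩
    (show i + (p - i + (a : ℕ)) < n by omega) (show i + (p - i + (b : ℕ)) < n by omega)
  rw [h1]
  exact (flt_congr τ (show p + (a : ℕ) = i + (p - i + (a : ℕ)) by omega)
    (show p + (b : ℕ) = i + (p - i + (b : ℕ)) by omega)).trans h2.symm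

lemma eqlen_rel {A B : Perm' k} (h : PattLE A B) (a b : Fin k) :
    A a < A b ↔ B a < B b := by
  obtain ⟨i, h0⟩ := h
  have hik := h0.1
  have hi : i = 0 := by omega
  subst hi
  have ha := a.isLt
  have hb := b.isLt
  have := occ_spec h0 a b (show 0 + (a : ℕ) < k by omega) (show 0 + (b : ℕ) < k by omega)
  rwa [fapp_congr B (show 0 + (a : ℕ) = ↑a by omega),
    fapp_congr B (show 0 + (b : ℕ) = ↑b by omega)] at this

lemma dir_of_occ {σ : Perm' m} {γ : Perm' k} {i : ℕ} {d : Bool}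
    (ho : OccursAt σ γ i) (hγ : DirP d (⇑γ)) : DirP d (⇑σ) := by
  intro a b hab
  have hb := ho.1
  have ha' := a.isLt
  have hb' := b.isLt
  have h1 := hγ ⟨i + ↑a, by omega⟩ ⟨i + ↑b, by omega⟩
    (show i + (a : ℕ) < i + (b : ℕ) by exact Nat.add_lt_add_left hab i)
  exact (drel_congr (occ_spec ho a b (by omega) (by omega)).symm
    (occ_spec ho b a (by omega) (by omega)).symm).mp h1

lemma occ_dir_iff {σ : Perm' m} {τ : Perm' n} {i : ℕ} {d : Bool}
    (hσ : DirP d (⇑σ)) (h : i + m ≤ n) :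
    OccursAt σ τ i ↔ ∀ a b : Fin m, a < b →
      drel d (τ ⟨i + ↑a, by have := a.isLt; omega⟩) (τ ⟨i + ↑b, by have := b.isLt; omega⟩) := by
  constructor
  · intro ho a b hab
    have ha := a.isLt; have hb := b.isLt
    exact (drel_congr (occ_spec ho a b (by omega) (by omega))
      (occ_spec ho b a (by omega) (by omega))).mp (hσ a b hab)
  · intro H
    refine ⟨h, fun a b => ?_⟩
    have ha := a.isLt; have hb := b.isLt
    rcases lt_trichotomy a b with hab | hab | hab
    · have h1 := H a b hab
      have h2 := hσ a b hab
      cases d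
      · exact iff_of_false (fun hl => (lt_asymm hl) h2) (fun hl => (lt_asymm hl) h1)
      · exact iff_of_true h2 h1
    · subst hab
      exact iff_of_false (lt_irrefl _) (lt_irrefl _)
    · have h1 := H b a hab
      have h2 := hσ b a hab
      cases d
      · exact iff_of_true h2 h1
      · exact iff_of_false (fun hl => (lt_asymm h2) hl) (fun hl => (lt_asymm h1) hl)

lemma shift_dir (hm : 1 ≤ m) {σ : Perm' m} {γ : Perm' (m + 1)}
    (h0 : OccursAt σ γ 0) (h1 : OccursAt σ γ 1) : ∃ d, DirP d (⇑γ) := by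
  have key : ∀ c (hc : c + 1 < m + 1),
      (γ ⟨c, by omega⟩ < γ ⟨c + 1, hc⟩ ↔ γ ⟨0, by omega⟩ < γ ⟨1, by omega⟩) := by
    intro c
    induction c with
    | zero => intro hc; exact Iff.rfl
    | succ e ih =>
      intro hc
      have hem : e + 1 < m := by omega
      have e0 := occ_spec h0 ⟨e, by omega⟩ ⟨e + 1, hem⟩
        (show 0 + e < m + 1 by omega) (show 0 + (e + 1) < m + 1 by omega)
      have e1 := occ_spec h1 ⟨e, by omega⟩ ⟨e + 1, hem⟩
        (show 1 + e < m + 1 by omega) (show 1 + (e + 1) < m + 1 by omega)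
      calc γ ⟨e + 1, by omega⟩ < γ ⟨e + 1 + 1, hc⟩
          ↔ γ ⟨1 + e, by omega⟩ < γ ⟨1 + (e + 1), by omega⟩ :=
            flt_congr γ (by omega) (by omega)
        _ ↔ σ ⟨e, by omega⟩ < σ ⟨e + 1, hem⟩ := e1.symm
        _ ↔ γ ⟨0 + e, by omega⟩ < γ ⟨0 + (e + 1), by omega⟩ := e0
        _ ↔ γ ⟨e, by omega⟩ < γ ⟨e + 1, by omega⟩ := flt_congr γ (by omega) (by omega)
        _ ↔ γ ⟨0, by omega⟩ < γ ⟨1, by omega⟩ := ih (by omega)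
  have hne : γ ⟨0, by omega⟩ ≠ γ ⟨1, by omega⟩ :=
    γ.injective.ne (by intro he; rw [Fin.mk.injEq] at he; omega)
  rcases lt_or_gt_of_ne hne with h01 | h01
  · refine ⟨true, dir_of_adj (fun c hc => ?_)⟩
    exact (key c hc).mpr h01
  · refine ⟨false, dir_of_adj (fun c hc => ?_)⟩
    show γ ⟨c + 1, hc⟩ < γ ⟨c, by omega⟩
    have hne2 : γ ⟨c + 1, hc⟩ ≠ γ ⟨c, by omega⟩ :=
      γ.injective.ne (by intro he; rw [Fin.mk.injEq] at he; omega)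
    rcases lt_or_gt_of_ne hne2 with h2 | h2
    · exact h2
    · exact absurd ((key c hc).mp h2) (fun hl => asymm h01 hl)

lemma not_mono_adj {τ : Perm' n} (hMon : ¬ IsMonotone τ) :
    (∃ c, ∃ hc : c + 1 < n, τ ⟨c + 1, hc⟩ < τ ⟨c, by omega⟩) ∧
      (∃ c, ∃ hc : c + 1 < n, τ ⟨c, by omega⟩ < τ ⟨c + 1, hc⟩) := by
  constructor
  · by_contra h
    push_neg at h
    apply hMon
    refine isMonotone_iff_dir.mpr ⟨true, dir_of_adj (fun c hc => ?_)⟩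
    show τ ⟨c, by omega⟩ < τ ⟨c + 1, hc⟩
    exact lt_of_le_of_ne (h c hc)
      (τ.injective.ne (by intro he; rw [Fin.mk.injEq] at he; omega))
  · by_contra h
    push_neg at h
    apply hMon
    refine isMonotone_iff_dir.mpr ⟨false, dir_of_adj (fun c hc => ?_)⟩
    show τ ⟨c + 1, hc⟩ < τ ⟨c, by omega⟩
    exact lt_of_le_of_ne (h c hc)
      (τ.injective.ne (by intro he; rw [Fin.mk.injEq] at he; omega))

lemma dir_le {π : Perm' k} {ρ : Perm' l} {d : Bool} (hkl : k ≤ l)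
    (hπ : DirP d (⇑π)) (hρ : DirP d (⇑ρ)) : PattLE π ρ := by
  refine ⟨0, (occ_dir_iff hπ (by omega)).mpr (fun a b hab => ?_)⟩
  have ha := a.isLt; have hb := b.isLt
  have h1 := hρ ⟨↑a, by omega⟩ ⟨↑b, by omega⟩ (show (a : ℕ) < (b : ℕ) from hab)
  exact (drel_congr (flt_congr ρ (show (a : ℕ) = 0 + ↑a by omega) (show (b : ℕ) = 0 + ↑b by omega))
    (flt_congr ρ (show (b : ℕ) = 0 + ↑b by omega) (show (a : ℕ) = 0 + ↑a by omega))).mp h1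

lemma prefix_le {π : Perm' k} {ρ : Perm' l} {τ : Perm' n} (hkl : k ≤ l)
    (hπ : OccursAt π τ 0) (hρ : OccursAt ρ τ 0) : PattLE π ρ := by
  have hkn := hπ.1
  have hln := hρ.1
  refine ⟨0, by omega, fun a b => ?_⟩
  have ha := a.isLt; have hb := b.isLt
  have h1 := occ_spec hπ a b (show 0 + (a : ℕ) < n by omega) (show 0 + (b : ℕ) < n by omega)
  have h2 := occ_spec hρ ⟨↑a, by omega⟩ ⟨↑b, by omega⟩
    (show 0 + (a : ℕ) < n by omega) (show 0 + (b : ℕ) < n by omega)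
  exact h1.trans (h2.symm.trans (flt_congr ρ (show (a : ℕ) = 0 + ↑a by omega)
    (show (b : ℕ) = 0 + ↑b by omega)))

lemma suffix_le {π : Perm' k} {ρ : Perm' l} {τ : Perm' n} (hkl : k ≤ l) (hln : l ≤ n)
    (hπ : OccursAt π τ (n - k)) (hρ : OccursAt ρ τ (n - l)) : PattLE π ρ := by
  have hkn := hπ.1
  refine ⟨l - k, by omega, fun a b => ?_⟩
  have ha := a.isLt; have hb := b.isLt
  have h1 := occ_spec hπ a b (show n - k + (a : ℕ) < n by omega)
    (show n - k + (b : ℕ) < n by omega)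
  have h2 := occ_spec hρ ⟨l - k + ↑a, show l - k + (a : ℕ) < l by omega⟩
    ⟨l - k + ↑b, show l - k + (b : ℕ) < l by omega⟩
    (show n - l + (l - k + (a : ℕ)) < n by omega) (show n - l + (l - k + (b : ℕ)) < n by omega)
  exact h1.trans ((flt_congr τ (show n - k + (a : ℕ) = n - l + (l - k + (a : ℕ)) by omega)
    (show n - k + (b : ℕ) = n - l + (l - k + (b : ℕ)) by omega)).trans h2.symm)

lemma elem_prefix {σ : Perm' m} {τ : Perm' n} {π : Perm' k}
    (hσπ : PattLE σ π) (hπτ : PattLE π τ)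
    (huniq : ∀ i, OccursAt σ τ i → i = 0) : OccursAt π τ 0 := by
  obtain ⟨s, hs⟩ := hσπ
  obtain ⟨u, hu⟩ := hπτ
  have h0 := huniq _ (occ_trans hs hu)
  have hu0 : u = 0 := by omega
  subst hu0
  exact hu

lemma elem_suffix {σ : Perm' m} {τ : Perm' n} {π : Perm' k}
    (hσπ : PattLE σ π) (hπτ : PattLE π τ)
    (huniq : ∀ i, OccursAt σ τ i → i = n - m) (hmn : m ≤ n) :
    OccursAt π τ (n - k) ∧ k ≤ n := by
  obtain ⟨s, hs⟩ := hσπ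
  obtain ⟨u, hu⟩ := hπτ
  have hsk := hs.1
  have hun := hu.1
  have h0 := huniq _ (occ_trans hs hu)
  have hu0 : u = n - k := by omega
  subst hu0
  exact ⟨hu, by omega⟩

section Chain

variable {m n : ℕ} {σ : Perm' m} {τ : Perm' n}

lemma chain_eqlen_rel
    (hch : ∀ p q : PermS, pLE ⟨m, σ⟩ p → pLE p ⟨n, τ⟩ → pLE ⟨m, σ⟩ q → pLE q ⟨n, τ⟩ →
      pLE p q ∨ pLE q p)
    {k : ℕ} {A B : Perm' k} (hA1 : PattLE σ A) (hA2 : PattLE A τ)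
    (hB1 : PattLE σ B) (hB2 : PattLE B τ) (a b : Fin k) : A a < A b ↔ B a < B b := by
  rcases hch ⟨k, A⟩ ⟨k, B⟩ hA1 hA2 hB1 hB2 with h | h
  · exact eqlen_rel h a b
  · exact (eqlen_rel h a b).symm

lemma pp_interior_step
    (hch : ∀ p q : PermS, pLE ⟨m, σ⟩ p → pLE p ⟨n, τ⟩ → pLE ⟨m, σ⟩ q → pLE q ⟨n, τ⟩ →
      pLE p q ∨ pLE q p)
    (hm : 1 ≤ m) {k : ℕ} (hk0 : 0 < k) (hkn : k + m < n)
    (ho : OccursAt σ τ k) : OccursAt σ τ (k - 1) ∧ OccursAt σ τ (k + 1) := by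
  have hu : (k - 1) + (m + 1) ≤ n := by omega
  have hv : k + (m + 1) ≤ n := by omega
  set A := window τ (k - 1) (m + 1) with hA
  set B := window τ k (m + 1) with hB
  have hAτ : OccursAt A τ (k - 1) := window_occursAt τ _ _ hu
  have hBτ : OccursAt B τ k := window_occursAt τ _ _ hv
  have hσA : OccursAt σ A 1 := by
    have h2 := occ_window_of_occ (i := k - 1) (k := m + 1) ho (by omega) (by omega) hu
    rwa [show k - (k - 1) = 1 by omega] at h2
  have hσB : OccursAt σ B 0 := by
    have h2 := occ_window_of_occ (i := k) (k := m + 1) ho (le_refl _) (by omega) hv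
    rwa [Nat.sub_self] at h2
  have hrel : ∀ a b : Fin (m + 1), A a < A b ↔ B a < B b :=
    chain_eqlen_rel hch ⟨1, hσA⟩ ⟨k - 1, hAτ⟩ ⟨0, hσB⟩ ⟨k, hBτ⟩
  have hσA0 : OccursAt σ A 0 := ⟨by omega, fun a b => (hσB.2 a b).trans (hrel _ _).symm⟩
  obtain ⟨d, hdA⟩ := shift_dir hm hσA0 hσA
  have hdσ : DirP d (⇑σ) := dir_of_occ hσA0 hdA
  have hdB : DirP d (⇑B) := fun a b hab => (drel_congr (hrel a b) (hrel b a)).mp (hdA a b hab)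
  constructor
  · refine (occ_dir_iff hdσ (by omega)).mpr (fun a b hab => ?_)
    have ha := a.isLt; have hb := b.isLt
    have h1 := hdA ⟨↑a, by omega⟩ ⟨↑b, by omega⟩ (show (a : ℕ) < (b : ℕ) from hab)
    exact (drel_congr
      (occ_spec hAτ ⟨↑a, by omega⟩ ⟨↑b, by omega⟩ (show k - 1 + (a : ℕ) < n by omega)
        (show k - 1 + (b : ℕ) < n by omega))
      (occ_spec hAτ ⟨↑b, by omega⟩ ⟨↑a, by omega⟩ (show k - 1 + (b : ℕ) < n by omega)
        (show k - 1 + (a : ℕ) < n by omega))).mp h1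
  · refine (occ_dir_iff hdσ (by omega)).mpr (fun a b hab => ?_)
    have ha := a.isLt; have hb := b.isLt
    have h1 := hdB ⟨↑a + 1, by omega⟩ ⟨↑b + 1, by omega⟩
      (show (a : ℕ) + 1 < (b : ℕ) + 1 from Nat.add_lt_add_right hab 1)
    exact (drel_congr
      ((occ_spec hBτ ⟨↑a + 1, by omega⟩ ⟨↑b + 1, by omega⟩ (show k + ((a : ℕ) + 1) < n by omega)
          (show k + ((b : ℕ) + 1) < n by omega)).trans
        (flt_congr τ (show k + ((a : ℕ) + 1) = k + 1 + ↑a by omega)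
          (show k + ((b : ℕ) + 1) = k + 1 + ↑b by omega)))
      ((occ_spec hBτ ⟨↑b + 1, by omega⟩ ⟨↑a + 1, by omega⟩ (show k + ((b : ℕ) + 1) < n by omega)
          (show k + ((a : ℕ) + 1) < n by omega)).trans
        (flt_congr τ (show k + ((b : ℕ) + 1) = k + 1 + ↑b by omega)
          (show k + ((a : ℕ) + 1) = k + 1 + ↑a by omega)))).mp h1

lemma pp_occ_everywhere
    (hch : ∀ p q : PermS, pLE ⟨m, σ⟩ p → pLE p ⟨n, τ⟩ → pLE ⟨m, σ⟩ q → pLE q ⟨n, τ⟩ →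
      pLE p q ∨ pLE q p)
    (hm : 1 ≤ m) {k : ℕ} (hk0 : 0 < k) (hkn : k + m < n)
    (ho : OccursAt σ τ k) : ∀ j, j + m ≤ n → OccursAt σ τ j := by
  have down : ∀ i, i ≤ k → OccursAt σ τ (k - i) := by
    intro i
    induction i with
    | zero => intro _; simpa using ho
    | succ t ih =>
      intro hik
      have h1 := ih (by omega)
      have h2 := (pp_interior_step hch hm (show 0 < k - t by omega)
        (show (k - t) + m < n by omega) h1).1
      rwa [show k - t - 1 = k - (t + 1) by omega] at h2
  have up : ∀ i, k + i + m ≤ n → OccursAt σ τ (k + i) := by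
    intro i
    induction i with
    | zero => intro _; exact ho
    | succ t ih =>
      intro hik
      have h1 := ih (by omega)
      exact (pp_interior_step hch hm (by omega) (by omega) h1).2
  intro j hj
  rcases le_total j k with h | h
  · have := down (k - j) (by omega)
    rwa [show k - (k - j) = j by omega] at this
  · have := up (j - k) (by omega)
    rwa [show k + (j - k) = j by omega] at this

lemma pp_interior_mono
    (hch : ∀ p q : PermS, pLE ⟨m, σ⟩ p → pLE p ⟨n, τ⟩ → pLE ⟨m, σ⟩ q → pLE q ⟨n, τ⟩ →
      pLE p q ∨ pLE q p)
    (hm2 : 2 ≤ m) {k : ℕ} (hk0 : 0 < k) (hkn : k + m < n)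
    (ho : OccursAt σ τ k) : IsMonotone τ := by
  have hall := pp_occ_everywhere hch (by omega) hk0 hkn ho
  have h0 := hall 0 (by omega)
  have h1 := hall 1 (by omega)
  have hu : 0 + (m + 1) ≤ n := by omega
  set C := window τ 0 (m + 1) with hC
  have hCτ : OccursAt C τ 0 := window_occursAt τ _ _ hu
  have hσC0 : OccursAt σ C 0 := by
    have h2 := occ_window_of_occ (i := 0) (k := m + 1) h0 (by omega) (by omega) hu
    rwa [Nat.sub_zero] at h2
  have hσC1 : OccursAt σ C 1 := by
    have h2 := occ_window_of_occ (i := 0) (k := m + 1) h1 (by omega) (by omega) hu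
    rwa [Nat.sub_zero] at h2
  obtain ⟨d, hdC⟩ := shift_dir (by omega) hσC0 hσC1
  have hdσ : DirP d (⇑σ) := dir_of_occ hσC0 hdC
  refine isMonotone_iff_dir.mpr ⟨d, dir_of_adj (fun c hc => ?_)⟩
  have hj : OccursAt σ τ (min c (n - m)) := hall _ (by omega)
  have hrels := (occ_dir_iff hdσ hj.1).mp hj
  have h2 := hrels ⟨c - min c (n - m), by omega⟩ ⟨c - min c (n - m) + 1, by omega⟩
    (show c - min c (n - m) < c - min c (n - m) + 1 by omega)
  exact (drel_congr
    (flt_congr τ (show min c (n - m) + (c - min c (n - m)) = c by omega)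
      (show min c (n - m) + (c - min c (n - m) + 1) = c + 1 by omega))
    (flt_congr τ (show min c (n - m) + (c - min c (n - m) + 1) = c + 1 by omega)
      (show min c (n - m) + (c - min c (n - m)) = c by omega))).mp h2

lemma pp_boundary_both
    (hch : ∀ p q : PermS, pLE ⟨m, σ⟩ p → pLE p ⟨n, τ⟩ → pLE ⟨m, σ⟩ q → pLE q ⟨n, τ⟩ →
      pLE p q ∨ pLE q p)
    (hm2 : 2 ≤ m) (h0 : OccursAt σ τ 0) (h1 : OccursAt σ τ (n - m)) (hne : n - m ≠ 0) :
    IsMonotone τ := by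
  have hmn : m + 1 ≤ n := by have := h0.1; omega
  have hu : 0 + (m + 1) ≤ n := by omega
  have hv : (n - m - 1) + (m + 1) ≤ n := by omega
  set A := window τ 0 (m + 1) with hA
  set B := window τ (n - m - 1) (m + 1) with hB
  have hAτ : OccursAt A τ 0 := window_occursAt τ _ _ hu
  have hBτ : OccursAt B τ (n - m - 1) := window_occursAt τ _ _ hv
  have hσA0 : OccursAt σ A 0 := by
    have h2 := occ_window_of_occ (i := 0) (k := m + 1) h0 (by omega) (by omega) hu
    rwa [Nat.sub_zero] at h2
  have hσB1 : OccursAt σ B 1 := by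
    have h2 := occ_window_of_occ (i := n - m - 1) (k := m + 1) h1 (by omega) (by omega) hv
    rwa [show n - m - (n - m - 1) = 1 by omega] at h2
  have hrel : ∀ a b : Fin (m + 1), A a < A b ↔ B a < B b :=
    chain_eqlen_rel hch ⟨0, hσA0⟩ ⟨0, hAτ⟩ ⟨1, hσB1⟩ ⟨n - m - 1, hBτ⟩
  have hσA1 : OccursAt σ A 1 := ⟨by omega, fun a b => (hσB1.2 a b).trans (hrel _ _).symm⟩
  obtain ⟨d, hdA⟩ := shift_dir (by omega) hσA0 hσA1
  have hdσ : DirP d (⇑σ) := dir_of_occ hσA0 hdA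
  have hocc1 : OccursAt σ τ 1 := by
    refine (occ_dir_iff hdσ (by omega)).mpr (fun a b hab => ?_)
    have ha := a.isLt; have hb := b.isLt
    have hd1 := hdA ⟨↑a + 1, by omega⟩ ⟨↑b + 1, by omega⟩
      (show (a : ℕ) + 1 < (b : ℕ) + 1 from Nat.add_lt_add_right hab 1)
    exact (drel_congr
      ((occ_spec hAτ ⟨↑a + 1, by omega⟩ ⟨↑b + 1, by omega⟩ (show 0 + ((a : ℕ) + 1) < n by omega)
          (show 0 + ((b : ℕ) + 1) < n by omega)).trans
        (flt_congr τ (show 0 + ((a : ℕ) + 1) = 1 + ↑a by omega)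
          (show 0 + ((b : ℕ) + 1) = 1 + ↑b by omega)))
      ((occ_spec hAτ ⟨↑b + 1, by omega⟩ ⟨↑a + 1, by omega⟩ (show 0 + ((b : ℕ) + 1) < n by omega)
          (show 0 + ((a : ℕ) + 1) < n by omega)).trans
        (flt_congr τ (show 0 + ((b : ℕ) + 1) = 1 + ↑b by omega)
          (show 0 + ((a : ℕ) + 1) = 1 + ↑a by omega)))).mp hd1
  rcases Nat.lt_or_ge 1 (n - m) with hlt | hge
  · exact pp_interior_mono hch hm2 (by omega) (by omega) hocc1
  · have hn : n = m + 1 := by omega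
    subst hn
    exact isMonotone_iff_dir.mpr (shift_dir (by omega) h0 hocc1)

end Chain

end Aux

/-- Proposition 2.3: the interval `[σ,τ]` is a chain iff `τ` is monotone,
or `σ` occurs exactly once in `τ` and does so as a prefix or a suffix. -/
theorem stmt1 {m n : ℕ} (hm : 1 ≤ m) (σ : Perm' m) (τ : Perm' n) (hle : PattLE σ τ) :
    (∀ p q : PermS, pLE ⟨m, σ⟩ p → pLE p ⟨n, τ⟩ → pLE ⟨m, σ⟩ q → pLE q ⟨n, τ⟩ →
        pLE p q ∨ pLE q p) ↔
      (IsMonotone τ ∨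
        ((∀ i j, OccursAt σ τ i → OccursAt σ τ j → i = j) ∧
          ∀ i, OccursAt σ τ i → i = 0 ∨ i = n - m)) := by
  constructor
  · intro hch
    by_cases hMon : IsMonotone τ
    · exact Or.inl hMon
    right
    rcases Nat.lt_or_ge m 2 with hm2 | hm2
    · exfalso
      have hm1 : m = 1 := by omega
      subst hm1
      obtain ⟨⟨c, hc, hdesc⟩, ⟨c', hc', hasc⟩⟩ := not_mono_adj hMon
      have hA : OccursAt (window τ c 2) τ c := window_occursAt τ _ _ (by omega)
      have hB : OccursAt (window τ c' 2) τ c' := window_occursAt τ _ _ (by omega)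
      have triv : ∀ W : Perm' 2, OccursAt σ W 0 := by
        intro W
        refine ⟨by omega, fun a b => ?_⟩
        have hab : a = b := Subsingleton.elim a b
        subst hab
        exact iff_of_false (lt_irrefl _) (lt_irrefl _)
      have hrel := chain_eqlen_rel hch ⟨0, triv _⟩ ⟨c, hA⟩ ⟨0, triv _⟩ ⟨c', hB⟩
      have e1 := occ_spec hA ⟨0, by omega⟩ ⟨1, by omega⟩ (show c + 0 < n by omega)
        (show c + 1 < n by omega)
      have e2 := occ_spec hB ⟨0, by omega⟩ ⟨1, by omega⟩ (show c' + 0 < n by omega)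
        (show c' + 1 < n by omega)
      have htrue : (window τ c' 2) ⟨0, by omega⟩ < (window τ c' 2) ⟨1, by omega⟩ :=
        e2.mpr ((flt_congr τ (show (c' : ℕ) = c' + 0 by omega) rfl).mp hasc)
      have hfalse := (hrel _ _).mpr htrue
      have h3 : τ ⟨c, by omega⟩ < τ ⟨c + 1, hc⟩ :=
        (flt_congr τ (show c + 0 = c by omega) (show c + 1 = c + 1 from rfl)).mp (e1.mp hfalse)
      exact (lt_asymm h3) hdesc
    · have hnotint : ∀ i, OccursAt σ τ i → i = 0 ∨ i = n - m := by
        intro i hi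
        by_contra hcon
        push_neg at hcon
        have hb := hi.1
        exact hMon (pp_interior_mono hch hm2 (by omega) (by omega) hi)
      refine ⟨?_, hnotint⟩
      intro i j hi hj
      by_contra hij
      have hkey : ∀ i' j', OccursAt σ τ i' → OccursAt σ τ j' → i' = 0 → j' = n - m →
          n - m ≠ 0 → False := by
        intro i' j' hi' hj' hh1 hh2 hh3
        subst hh1; subst hh2
        exact hMon (pp_boundary_both hch hm2 hi' hj' hh3)
      rcases hnotint i hi with h1 | h1 <;> rcases hnotint j hj with h2 | h2
      · omega
      · exact hkey i j hi hj h1 h2 (by omega)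
      · exact hkey j i hj hi h2 h1 (by omega)
      · omega
  · rintro (hMon | ⟨huniq, hbd⟩) p q hp1 hp2 hq1 hq2
    · obtain ⟨k, π⟩ := p
      obtain ⟨l, ρ⟩ := q
      obtain ⟨d, hd⟩ := isMonotone_iff_dir.mp hMon
      obtain ⟨u, hu⟩ := hp2
      obtain ⟨v, hv⟩ := hq2
      have hdπ : DirP d (⇑π) := dir_of_occ hu hd
      have hdρ : DirP d (⇑ρ) := dir_of_occ hv hd
      rcases le_total k l with h | h
      · exact Or.inl (dir_le h hdπ hdρ)
      · exact Or.inr (dir_le h hdρ hdπ)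
    · obtain ⟨k, π⟩ := p
      obtain ⟨l, ρ⟩ := q
      obtain ⟨t, ht⟩ := hle
      rcases hbd t ht with h0 | h0
      · subst h0
        have hun : ∀ i, OccursAt σ τ i → i = 0 := fun i hi => huniq i 0 hi ht
        have hπ0 : OccursAt π τ 0 := elem_prefix hp1 hp2 hun
        have hρ0 : OccursAt ρ τ 0 := elem_prefix hq1 hq2 hun
        rcases le_total k l with h | h
        · exact Or.inl (prefix_le h hπ0 hρ0)
        · exact Or.inr (prefix_le h hρ0 hπ0)
      · subst h0
        have hun : ∀ i, OccursAt σ τ i → i = n - m := fun i hi => huniq i (n - m) hi ht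
        have hmn : m ≤ n := by have := ht.1; omega
        obtain ⟨hπs, hkn⟩ := elem_suffix hp1 hp2 hun hmn
        obtain ⟨hρs, hln⟩ := elem_suffix hq1 hq2 hun hmn
        rcases le_total k l with h | h
        · exact Or.inl (suffix_le h hln hπs hρs)
        · exact Or.inr (suffix_le h hkn hρs hπs)

end
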